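/- Suppose b·γ < μ. Let (u,v,w) : [0,∞) → ℝ³ be a continuously differentiable solution of the tritrophic ODE system with u(t) ≥ 0, v(t) ≥ 0, w(t) ≥ 0 for all t ≥ 0. Then v(t) ≤ v(0)·exp(−(μ − b·γ)·t) for all t ≥ 0; in particular v(t) → 0 as t → ∞ (the mesopredator vanishes). -/

import Mathlib

/-- If `bγ < μ`, the mesopredator vanishes: for any continuously differentiable
nonnegative solution of the tritrophic system on `[0,∞)`,
`v(t) ≤ v(0)·exp(-(μ - bγ)t)` for all `t ≥ 0`, and `v(t) → 0` as `t → ∞`. -/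
theorem mesopredator_vanishes
    (α K a b c d γ μ ν β : ℝ)
    (hα : 0 < α) (hK : 0 < K) (ha : 0 < a) (hb : 0 < b) (hc : 0 < c)
    (hd : 0 < d) (hγ : 0 < γ) (hμ : 0 < μ) (hν : 0 < ν) (hβ : 0 < β)
    (hbγμ : b * γ < μ)
    (u v w : ℝ → ℝ)
    (hu : ∀ t : ℝ, 0 ≤ t →
      HasDerivAt u (α * u t * (1 - u t / K) - b * u t * v t / (u t + a)) t)
    (hv : ∀ t : ℝ, 0 ≤ t →
      HasDerivAt v (γ * (b * u t * v t / (u t + a)) - c * v t * w t / (v t + d) - μ * v t) t)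
    (hw : ∀ t : ℝ, 0 ≤ t →
      HasDerivAt w (β * (c * v t * w t / (v t + d)) - ν * w t) t)
    (hunn : ∀ t : ℝ, 0 ≤ t → 0 ≤ u t)
    (hvnn : ∀ t : ℝ, 0 ≤ t → 0 ≤ v t)
    (hwnn : ∀ t : ℝ, 0 ≤ t → 0 ≤ w t) :
    (∀ t : ℝ, 0 ≤ t → v t ≤ v 0 * Real.exp (-(μ - b * γ) * t)) ∧
    Filter.Tendsto v Filter.atTop (nhds 0) := by
  set k : ℝ := μ - b * γ with hk
  have hkpos : 0 < k := by simp [hk]; linarith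
  set g : ℝ → ℝ := fun t => v t * Real.exp (k * t) with hg
  -- derivative of g
  have hgd : ∀ t : ℝ, 0 ≤ t → HasDerivAt g
      ((γ * (b * u t * v t / (u t + a)) - c * v t * w t / (v t + d) - μ * v t + k * v t)
        * Real.exp (k * t)) t := by
    intro t ht
    have he : HasDerivAt (fun t : ℝ => Real.exp (k * t)) (Real.exp (k * t) * (k * 1)) t :=
      ((hasDerivAt_id t).const_mul k).exp
    have := (hv t ht).mul he
    exact this.congr_deriv (by ring)
  -- the derivative is nonpositive
  have hder_nonpos : ∀ t : ℝ, 0 ≤ t →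
      (γ * (b * u t * v t / (u t + a)) - c * v t * w t / (v t + d) - μ * v t + k * v t)
        * Real.exp (k * t) ≤ 0 := by
    intro t ht
    have hua : 0 < u t + a := by have := hunn t ht; linarith
    have hvd : 0 < v t + d := by have := hvnn t ht; linarith
    have h1 : γ * (b * u t * v t / (u t + a)) ≤ γ * (b * v t) := by
      apply mul_le_mul_of_nonneg_left _ hγ.le
      rw [div_le_iff₀ hua]
      nlinarith [mul_nonneg (mul_nonneg hb.le (hvnn t ht)) ha.le]
    have h2 : 0 ≤ c * v t * w t / (v t + d) := by
      apply div_nonneg _ hvd.le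
      have := hvnn t ht; have := hwnn t ht; positivity
    have h3 : γ * (b * u t * v t / (u t + a)) - c * v t * w t / (v t + d) - μ * v t
        + k * v t ≤ 0 := by
      have : k * v t = μ * v t - b * γ * v t := by rw [hk]; ring
      nlinarith
    exact mul_nonpos_of_nonpos_of_nonneg h3 (Real.exp_pos _).le
  -- g is antitone on [0, ∞)
  have hanti : AntitoneOn g (Set.Ici (0:ℝ)) := by
    apply antitoneOn_of_deriv_nonpos (convex_Ici 0)
    · intro t ht
      exact ((hgd t ht).continuousAt).continuousWithinAt
    · intro t ht
      rw [interior_Ici] at ht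
      exact ((hgd t (le_of_lt ht)).differentiableAt).differentiableWithinAt
    · intro t ht
      rw [interior_Ici] at ht
      rw [(hgd t ht.le).deriv]
      exact hder_nonpos t ht.le
  have hbound : ∀ t : ℝ, 0 ≤ t → v t ≤ v 0 * Real.exp (-k * t) := by
    intro t ht
    have hgle : g t ≤ g 0 := hanti (Set.self_mem_Ici) ht ht
    have h0 : g 0 = v 0 := by simp [hg]
    have : v t * Real.exp (k * t) ≤ v 0 := by rw [← h0]; exact hgle
    have hexp : (0:ℝ) < Real.exp (k * t) := Real.exp_pos _
    rw [neg_mul, Real.exp_neg, ← div_eq_mul_inv, le_div_iff₀ hexp]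
    linarith
  refine ⟨hbound, ?_⟩
  -- squeeze to 0
  have hlim : Filter.Tendsto (fun t : ℝ => v 0 * Real.exp (-k * t)) Filter.atTop (nhds 0) := by
    have : Filter.Tendsto (fun t : ℝ => -k * t) Filter.atTop Filter.atBot := by
      exact Filter.Tendsto.const_mul_atTop_of_neg (neg_neg_iff_pos.mpr hkpos) Filter.tendsto_id
    simpa using (Real.tendsto_exp_atBot.comp this).const_mul (v 0)
  apply tendsto_of_tendsto_of_tendsto_of_le_of_le' tendsto_const_nhds hlim
  · filter_upwards [Filter.eventually_ge_atTop (0:ℝ)] with t ht using hvnn t ht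
  · filter_upwards [Filter.eventually_ge_atTop (0:ℝ)] with t ht using hbound t ht
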